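/- Let A be a nonempty finite alphabet, μ a probability distribution on A, n ≥ 1, and μ^n the product distribution on words Fin n → A. For a word u, let S_u = {v : Fin n → A | ν_v(a) = ν_u(a) for all a ∈ A} be its type class. Then the distribution obtained by first drawing U according to μ^n and then drawing V uniformly at random from S_U equals μ^n; that is, the PMF bind of μ^n with u ↦ Uniform(S_u) is μ^n. Consequently the output blocks of the stegosystem St_n(A) have exactly the covertext distribution μ^n. -/

import Mathlib

theorem stmt8 (A : Type*) [Fintype A] [Nonempty A] [DecidableEq A] (μ : PMF A)
    (n : ℕ) (hn : 1 ≤ n)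
    -- μⁿ is the product distribution on words of length n
    (μn : PMF (Fin n → A)) (hμn : ∀ u : Fin n → A, μn u = ∏ i, μ (u i)) :
    -- drawing U ~ μⁿ and then V uniformly from the type class S_U gives back μⁿ
    (μn.bind fun u =>
        PMF.uniformOfFinset
          (Finset.univ.filter fun v : Fin n → A =>
            ∀ a : A, (Finset.univ.filter fun i => v i = a).card =
              (Finset.univ.filter fun i => u i = a).card)
          ⟨u, by simp⟩) = μn := by
  classical
  set cnt : (Fin n → A) → A → ℕ :=
    fun w a => (Finset.univ.filter fun i => w i = a).card with hcnt
  set S : (Fin n → A) → Finset (Fin n → A) :=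
    fun u => Finset.univ.filter fun v => ∀ a, cnt v a = cnt u a with hS
  have hmemS : ∀ u v : Fin n → A, v ∈ S u ↔ ∀ a, cnt v a = cnt u a := by
    intro u v; simp [hS]
  -- the probability only depends on the counts
  have key : ∀ x : Fin n → A, ∏ i, μ (x i) = ∏ a, μ a ^ cnt x a := by
    intro x
    rw [← Finset.prod_fiberwise Finset.univ (fun i => x i) (fun i => μ (x i))]
    refine Finset.prod_congr rfl fun a _ => ?_
    have : ∏ i ∈ Finset.filter (fun i => x i = a) Finset.univ, μ (x i)
        = ∏ _i ∈ Finset.filter (fun i => x i = a) Finset.univ, μ a :=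
      Finset.prod_congr rfl fun i hi => by
        simp only [Finset.mem_filter] at hi; rw [hi.2]
    rw [this, Finset.prod_const]
  have hprod : ∀ u w : Fin n → A, (∀ a, cnt w a = cnt u a) → μn w = μn u := by
    intro u w h
    rw [hμn, hμn, key, key]
    exact Finset.prod_congr rfl fun a _ => by rw [h a]
  -- type classes are equal for elements with equal counts
  have hSeq : ∀ u v : Fin n → A, (∀ a, cnt v a = cnt u a) → S u = S v := by
    intro u v h
    ext w
    rw [hmemS, hmemS]
    exact ⟨fun hw a => by rw [hw a, h a], fun hw a => by rw [hw a, ← h a]⟩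
  ext v
  rw [PMF.bind_apply, tsum_fintype]
  have step : ∀ u : Fin n → A,
      μn u * (PMF.uniformOfFinset (S u) ⟨u, by simp [hmemS]⟩) v
        = if u ∈ S v then μn v * ((S v).card : ENNReal)⁻¹ else 0 := by
    intro u
    erw [PMF.uniformOfFinset_apply]
    by_cases h : v ∈ S u
    · have h' := (hmemS u v).1 h
      have hu : u ∈ S v := (hmemS v u).2 fun a => (h' a).symm
      rw [if_pos h, if_pos hu, hprod u v h', hSeq u v h']
    · have hu : u ∉ S v := fun hu =>
        h ((hmemS u v).2 fun a => ((hmemS v u).1 hu a).symm)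
      rw [if_neg h, if_neg hu, mul_zero]
  calc (∑ u : Fin n → A, μn u *
          (PMF.uniformOfFinset (S u) ⟨u, by simp [hmemS]⟩) v)
      = ∑ u : Fin n → A, if u ∈ S v then μn v * ((S v).card : ENNReal)⁻¹ else 0 :=
        Finset.sum_congr rfl fun u _ => step u
    _ = ∑ u ∈ Finset.univ ∩ S v, μn v * ((S v).card : ENNReal)⁻¹ :=
        Finset.sum_ite_mem _ _ _
    _ = (S v).card • (μn v * ((S v).card : ENNReal)⁻¹) := by
        rw [Finset.univ_inter, Finset.sum_const]
    _ = μn v := by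
        rw [nsmul_eq_mul, mul_comm (μn v), ← mul_assoc,
          ENNReal.mul_inv_cancel, one_mul]
        · have : v ∈ S v := (hmemS v v).2 fun a => rfl
          simpa using Finset.card_ne_zero_of_mem this
        · exact ENNReal.natCast_ne_top _
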